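/- The operator U_A on ℋ ⊗ ℋ = L²((ℝⁿ×ℝⁿ×ℝ)²), defined by (U_A ξ)(x,y,r,x',y',r') = (e^{−λr'})ⁿ ē[η_λ(r') β(e^{−λr'}x, y' − e^{−λr'}y)] ξ(e^{−λr'}x, e^{−λr'}y, r+r', x'−e^{−λr'}x, y'−e^{−λr'}y, r'), is a unitary operator. -/

import Mathlib

open MeasureTheory
open scoped ENNReal NNReal
noncomputable section

/-- ℝⁿ -/
abbrev Rn (n : ℕ) := Fin n → ℝ

/-- η_λ(r) = (e^{2λr} − 1)/(2λ) -/
def eta (l r : ℝ) : ℝ := (Real.exp (2 * l * r) - 1) / (2 * l)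

/-- ē(t) = e^{−2πit} -/
def ebar (t : ℝ) : ℂ := Complex.exp (-2 * Real.pi * t * Complex.I)

/-- standard inner product β on ℝⁿ -/
def beta {n : ℕ} (x y : Rn n) : ℝ := ∑ i, x i * y i

/-- membership in 𝒜: Schwartz in (x,y,r), compactly supported in r -/
def IsA {n : ℕ} (f : Rn n → Rn n → ℝ → ℂ) : Prop :=
  (∃ F : SchwartzMap ((Rn n × Rn n) × ℝ) ℂ, ∀ x y r, f x y r = F ((x, y), r)) ∧
  (∃ C : ℝ, ∀ x y r, f x y r ≠ 0 → |r| ≤ C)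

/-- twisted convolution product -/
def tMul {n : ℕ} (l : ℝ) (f g : Rn n → Rn n → ℝ → ℂ) : Rn n → Rn n → ℝ → ℂ :=
  fun x y r => ∫ xt : Rn n, ∫ yt : Rn n,
    f xt yt r * g (x - xt) (y - yt) r * ebar (eta l r * beta xt (y - yt))

/-- twisted involution -/
def tStar {n : ℕ} (l : ℝ) (f : Rn n → Rn n → ℝ → ℂ) : Rn n → Rn n → ℝ → ℂ :=
  fun x y r => (starRingEnd ℂ) (f (-x) (-y) r) * ebar (eta l r * beta x y)

/-- φ(f) = ∫ f(0,0,r) dr -/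
def PhiF {n : ℕ} (f : Rn n → Rn n → ℝ → ℂ) : ℂ := ∫ r : ℝ, f 0 0 r

/-- continuous with compact support (as a function of all variables) -/
def CC {n : ℕ} (ξ : Rn n → Rn n → ℝ → ℂ) : Prop :=
  Continuous (fun p : (Rn n × Rn n) × ℝ => ξ p.1.1 p.1.2 p.2) ∧
  HasCompactSupport (fun p : (Rn n × Rn n) × ℝ => ξ p.1.1 p.1.2 p.2)

/-- L² inner product ⟨f,g⟩ (linear in the first variable, conjugate in the second) -/
def ip {n : ℕ} (f g : Rn n → Rn n → ℝ → ℂ) : ℂ :=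
  ∫ x : Rn n, ∫ y : Rn n, ∫ r : ℝ, f x y r * (starRingEnd ℂ) (g x y r)

/-- the regular representation L_f ξ (same integral formula as the twisted product) -/
def Lop {n : ℕ} (l : ℝ) (f ξ : Rn n → Rn n → ℝ → ℂ) : Rn n → Rn n → ℝ → ℂ :=
  tMul l f ξ

/-- functions of two triples of variables (elements of ℋ ⊗ ℋ, as functions) -/
abbrev F6 (n : ℕ) := Rn n → Rn n → ℝ → Rn n → Rn n → ℝ → ℂ

/-- the multiplicative unitary U_A -/
def Uop {n : ℕ} (l : ℝ) (ξ : F6 n) : F6 n :=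
  fun x y r x' y' r' =>
    (((Real.exp (-l * r')) ^ n : ℝ) : ℂ) *
      ebar (eta l r' * beta (Real.exp (-l * r') • x) (y' - Real.exp (-l * r') • y)) *
      ξ (Real.exp (-l * r') • x) (Real.exp (-l * r') • y) (r + r')
        (x' - Real.exp (-l * r') • x) (y' - Real.exp (-l * r') • y) r'

/-- uncurrying of a six-variable function -/
def unc6 {n : ℕ} (ξ : F6 n) :
    ((Rn n × Rn n) × ℝ) × ((Rn n × Rn n) × ℝ) → ℂ :=
  fun p => ξ p.1.1.1 p.1.1.2 p.1.2 p.2.1.1 p.2.1.2 p.2.2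

/-! ### Auxiliary development -/

abbrev Zn (n : ℕ) := Rn n × Rn n
abbrev Hh (n : ℕ) := Zn n × ℝ
abbrev Pp (n : ℕ) := Hh n × Hh n

lemma ebar_add (s t : ℝ) : ebar (s + t) = ebar s * ebar t := by
  rw [ebar, ebar, ebar, ← Complex.exp_add]
  congr 1
  push_cast
  ring

lemma ebar_zero : ebar 0 = 1 := by simp [ebar]

lemma ebar_neg_mul (t : ℝ) : ebar (-t) * ebar t = 1 := by
  rw [← ebar_add, neg_add_cancel, ebar_zero]

lemma norm_ebar (t : ℝ) : ‖ebar t‖ = 1 := by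
  rw [ebar, Complex.norm_exp]
  simp [Complex.mul_I_re]

/-- the inverse of `Uop` -/
def Vop {n : ℕ} (l : ℝ) (η : F6 n) : F6 n :=
  fun x y r x' y' r' =>
    (((Real.exp (l * r')) ^ n : ℝ) : ℂ) * ebar (-(eta l r' * beta x y')) *
      η (Real.exp (l * r') • x) (Real.exp (l * r') • y) (r - r') (x' + x) (y' + y) r'

lemma exp_neg_mul_exp (l r' : ℝ) : Real.exp (-l * r') * Real.exp (l * r') = 1 := by
  rw [← Real.exp_add]
  norm_num

lemma exp_mul_exp_neg (l r' : ℝ) : Real.exp (l * r') * Real.exp (-l * r') = 1 := by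
  rw [← Real.exp_add]
  norm_num

lemma Vop_Uop {n : ℕ} (l : ℝ) (ξ : F6 n) : Vop l (Uop l ξ) = ξ := by
  funext x y s x' y' r'
  simp only [Vop, Uop, smul_smul, exp_neg_mul_exp, one_smul, add_sub_cancel_right,
    sub_add_cancel]
  have h1 : (((Real.exp (l * r')) ^ n : ℝ) : ℂ) * (((Real.exp (-l * r')) ^ n : ℝ) : ℂ) = 1 := by
    rw [← Complex.ofReal_mul, ← mul_pow, exp_mul_exp_neg, one_pow, Complex.ofReal_one]
  calc (((Real.exp (l * r')) ^ n : ℝ) : ℂ) * ebar (-(eta l r' * beta x y')) *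
        ((((Real.exp (-l * r')) ^ n : ℝ) : ℂ) * ebar (eta l r' * beta x y') *
          ξ x y s x' y' r')
      = ((((Real.exp (l * r')) ^ n : ℝ) : ℂ) * (((Real.exp (-l * r')) ^ n : ℝ) : ℂ)) *
          (ebar (-(eta l r' * beta x y')) * ebar (eta l r' * beta x y')) *
          ξ x y s x' y' r' := by ring
    _ = ξ x y s x' y' r' := by rw [h1, ebar_neg_mul, one_mul, one_mul]

lemma Uop_Vop {n : ℕ} (l : ℝ) (η : F6 n) : Uop l (Vop l η) = η := by
  funext x y r x' y' r'
  simp only [Uop, Vop, smul_smul, exp_mul_exp_neg, one_smul, add_sub_cancel_right,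
    sub_add_cancel]
  have h1 : (((Real.exp (-l * r')) ^ n : ℝ) : ℂ) * (((Real.exp (l * r')) ^ n : ℝ) : ℂ) = 1 := by
    rw [← Complex.ofReal_mul, ← mul_pow, exp_neg_mul_exp, one_pow, Complex.ofReal_one]
  set t := eta l r' * beta (Real.exp (-l * r') • x) (y' - Real.exp (-l * r') • y) with ht
  calc (((Real.exp (-l * r')) ^ n : ℝ) : ℂ) * ebar t *
        ((((Real.exp (l * r')) ^ n : ℝ) : ℂ) * ebar (-t) * η x y r x' y' r')
      = ((((Real.exp (-l * r')) ^ n : ℝ) : ℂ) * (((Real.exp (l * r')) ^ n : ℝ) : ℂ)) *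
          (ebar (-t) * ebar t) * η x y r x' y' r' := by ring
    _ = η x y r x' y' r' := by rw [h1, ebar_neg_mul, one_mul, one_mul]

/-- the underlying point transformation of `Uop` -/
def Tmap (n : ℕ) (l : ℝ) (p : Pp n) : Pp n :=
  ((Real.exp (-l * p.2.2) • p.1.1, p.1.2 + p.2.2),
   (p.2.1 - Real.exp (-l * p.2.2) • p.1.1, p.2.2))

lemma tmap_continuous (n : ℕ) (l : ℝ) : Continuous (Tmap n l) := by
  unfold Tmap
  fun_prop

lemma tmap_measurable (n : ℕ) (l : ℝ) : Measurable (Tmap n l) :=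
  (tmap_continuous n l).measurable

instance instHaarZn (n : ℕ) : (volume : Measure (Zn n)).IsAddHaarMeasure :=
  Measure.prod.instIsAddHaarMeasure _ _

instance instRIZn (n : ℕ) : (volume : Measure (Zn n)).IsAddRightInvariant :=
  Measure.prod.instIsAddRightInvariant

lemma finrank_Zn (n : ℕ) : Module.finrank ℝ (Zn n) = 2 * n := by
  simp [Module.finrank_prod, Module.finrank_pi, two_mul]

section Fubini

variable {n : ℕ}

lemma fubini_H (g : Hh n → ℝ≥0∞) (hg : Measurable g) :
    ∫⁻ h, g h = ∫⁻ z : Zn n, ∫⁻ r : ℝ, g (z, r) := by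
  rw [Measure.volume_eq_prod, lintegral_prod _ hg.aemeasurable]

lemma fubini_H' (g : Hh n → ℝ≥0∞) (hg : Measurable g) :
    ∫⁻ h, g h = ∫⁻ r : ℝ, ∫⁻ z : Zn n, g (z, r) := by
  rw [Measure.volume_eq_prod, lintegral_prod_symm _ hg.aemeasurable]

lemma fubini_P (G : Pp n → ℝ≥0∞) (hG : Measurable G) :
    ∫⁻ p, G p = ∫⁻ h' : Hh n, ∫⁻ h : Hh n, G (h, h') := by
  rw [Measure.volume_eq_prod, lintegral_prod_symm _ hG.aemeasurable]

/-- iterated form of the integral over `Pp n`, in the order r', z, r, z'. -/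
lemma iter_P (G : Pp n → ℝ≥0∞) (hG : Measurable G) :
    ∫⁻ p, G p
      = ∫⁻ r' : ℝ, ∫⁻ z : Zn n, ∫⁻ r : ℝ, ∫⁻ z' : Zn n, G ((z, r), (z', r')) := by
  have h1 : ∫⁻ p, G p = ∫⁻ h' : Hh n, ∫⁻ h : Hh n, G (h, h') := fubini_P G hG
  have h2 : ∫⁻ h' : Hh n, ∫⁻ h : Hh n, G (h, h')
      = ∫⁻ r' : ℝ, ∫⁻ z' : Zn n, ∫⁻ h : Hh n, G (h, (z', r')) :=
    fubini_H' (fun h' => ∫⁻ h : Hh n, G (h, h')) (Measurable.lintegral_prod_left' hG)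
  have h3 : ∀ r' : ℝ, ∫⁻ z' : Zn n, ∫⁻ h : Hh n, G (h, (z', r'))
      = ∫⁻ z : Zn n, ∫⁻ r : ℝ, ∫⁻ z' : Zn n, G ((z, r), (z', r')) := by
    intro r'
    have hsw : ∫⁻ z' : Zn n, ∫⁻ h : Hh n, G (h, (z', r'))
        = ∫⁻ h : Hh n, ∫⁻ z' : Zn n, G (h, (z', r')) :=
      lintegral_lintegral_swap
        ((hG.comp (show Measurable fun q : Zn n × Hh n => (q.2, (q.1, r')) by
          fun_prop)).aemeasurable)
    refine hsw.trans ?_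
    exact fubini_H _ (Measurable.lintegral_prod_right'
      (hG.comp (show Measurable fun q : Hh n × Zn n => (q.1, (q.2, r')) by fun_prop)))
  rw [h1, h2]
  exact lintegral_congr h3

end Fubini

lemma lintegral_comp_smul_Zn (n : ℕ) {a : ℝ} (ha : a ≠ 0) (J : Zn n → ℝ≥0∞)
    (hJ : Measurable J) :
    ∫⁻ z : Zn n, J (a • z)
      = ENNReal.ofReal |(a ^ Module.finrank ℝ (Zn n))⁻¹| * ∫⁻ z, J z := by
  rw [← lintegral_map hJ ((continuous_const_smul a).measurable),
    Measure.map_addHaar_smul volume ha, lintegral_smul_measure, smul_eq_mul]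

/-- Key change-of-variables identity for `Tmap`. -/
lemma key_lintegral (n : ℕ) (l : ℝ) (F : Pp n → ℝ≥0∞) (hF : Measurable F) :
    ∫⁻ p, ENNReal.ofReal (Real.exp (-l * p.2.2) ^ (2 * n)) * F (Tmap n l p)
      = ∫⁻ p, F p := by
  have hG : Measurable (fun p : Pp n =>
      ENNReal.ofReal (Real.exp (-l * p.2.2) ^ (2 * n)) * F (Tmap n l p)) := by
    apply Measurable.mul
    · apply Measurable.ennreal_ofReal
      fun_prop
    · exact hF.comp (tmap_measurable n l)
  rw [iter_P _ hG, iter_P F hF]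
  refine lintegral_congr fun r' => ?_
  set a : ℝ := Real.exp (-l * r') with ha_def
  have ha0 : 0 < a := Real.exp_pos _
  have ha : a ≠ 0 := ha0.ne'
  have hinner : Measurable (fun h : Hh n => ∫⁻ z' : Zn n, F (h, (z', r'))) :=
    Measurable.lintegral_prod_right'
      (hF.comp (show Measurable fun q : Hh n × Zn n => (q.1, (q.2, r')) by fun_prop))
  have hJm : Measurable (fun w : Zn n => ∫⁻ r : ℝ, ∫⁻ z' : Zn n, F ((w, r), (z', r'))) :=
    Measurable.lintegral_prod_right'
      (hinner.comp (show Measurable fun q : Zn n × ℝ => ((q.1, q.2) : Hh n) by fun_prop))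
  have step1 : ∀ z : Zn n, ∀ r : ℝ,
      (∫⁻ z' : Zn n, F ((a • z, r + r'), (z' - a • z, r')))
        = ∫⁻ z' : Zn n, F ((a • z, r + r'), (z', r')) := by
    intro z r
    exact (measurePreserving_sub_right volume (a • z)).lintegral_comp
      (hF.comp (show Measurable fun z' : Zn n => (((a • z, r + r'), (z', r')) : Pp n) by
        fun_prop))
  have step2 : ∀ z : Zn n,
      (∫⁻ r : ℝ, ∫⁻ z' : Zn n, F ((a • z, r + r'), (z', r')))
        = ∫⁻ r : ℝ, ∫⁻ z' : Zn n, F ((a • z, r), (z', r')) := by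
    intro z
    exact (measurePreserving_add_right volume r').lintegral_comp
      (hinner.comp (show Measurable fun t : ℝ => ((a • z, t) : Hh n) by fun_prop))
  have hconst : ENNReal.ofReal (a ^ (2 * n)) *
      ENNReal.ofReal |(a ^ Module.finrank ℝ (Zn n))⁻¹| = 1 := by
    rw [finrank_Zn, abs_of_pos (by positivity), ← ENNReal.ofReal_mul (by positivity),
      mul_inv_cancel₀ (by positivity), ENNReal.ofReal_one]
  calc ∫⁻ z : Zn n, ∫⁻ r : ℝ, ∫⁻ z' : Zn n,
        ENNReal.ofReal (a ^ (2 * n)) * F ((a • z, r + r'), (z' - a • z, r'))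
      = ∫⁻ z : Zn n, ENNReal.ofReal (a ^ (2 * n)) *
          ∫⁻ r : ℝ, ∫⁻ z' : Zn n, F ((a • z, r + r'), (z' - a • z, r')) := by
        refine lintegral_congr fun z => ?_
        rw [← lintegral_const_mul' _ _ ENNReal.ofReal_ne_top]
        exact lintegral_congr fun r =>
          (lintegral_const_mul' _ _ ENNReal.ofReal_ne_top).symm ▸ rfl
    _ = ∫⁻ z : Zn n, ENNReal.ofReal (a ^ (2 * n)) *
          ∫⁻ r : ℝ, ∫⁻ z' : Zn n, F ((a • z, r), (z', r')) := by
        refine lintegral_congr fun z => ?_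
        congr 1
        exact (lintegral_congr fun r => step1 z r).trans (step2 z)
    _ = ENNReal.ofReal (a ^ (2 * n)) *
          ∫⁻ z : Zn n, ∫⁻ r : ℝ, ∫⁻ z' : Zn n, F ((a • z, r), (z', r')) :=
        lintegral_const_mul' _ _ ENNReal.ofReal_ne_top
    _ = ENNReal.ofReal (a ^ (2 * n)) *
          (ENNReal.ofReal |(a ^ Module.finrank ℝ (Zn n))⁻¹| *
            ∫⁻ z : Zn n, ∫⁻ r : ℝ, ∫⁻ z' : Zn n, F ((z, r), (z', r'))) := by
        exact congrArg (ENNReal.ofReal (a ^ (2 * n)) * ·)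
          (lintegral_comp_smul_Zn n ha _ hJm)
    _ = ∫⁻ z : Zn n, ∫⁻ r : ℝ, ∫⁻ z' : Zn n, F ((z, r), (z', r')) := by
        rw [← mul_assoc, hconst, one_mul]

lemma tmap_qmp (n : ℕ) (l : ℝ) :
    Measure.QuasiMeasurePreserving (Tmap n l) volume volume := by
  refine ⟨tmap_measurable n l, ?_⟩
  refine Measure.AbsolutelyContinuous.mk fun s hs h0 => ?_
  rw [Measure.map_apply (tmap_measurable n l) hs]
  have hkey := key_lintegral n l (s.indicator 1) (measurable_one.indicator hs)
  rw [lintegral_indicator_one hs, h0] at hkey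
  have hmeas : Measurable fun p : Pp n =>
      ENNReal.ofReal (Real.exp (-l * p.2.2) ^ (2 * n)) *
        s.indicator 1 (Tmap n l p) := by
    apply Measurable.mul
    · apply Measurable.ennreal_ofReal
      fun_prop
    · exact (measurable_one.indicator hs).comp (tmap_measurable n l)
  rw [lintegral_eq_zero_iff hmeas] at hkey
  rw [Filter.EventuallyEq, ae_iff] at hkey
  refine measure_mono_null ?_ hkey
  intro p hp
  simp only [Set.mem_setOf_eq, Pi.zero_apply]
  rw [Set.mem_preimage] at hp
  rw [Set.indicator_of_mem hp]
  simp only [Pi.one_apply, mul_one, ENNReal.ofReal_eq_zero, not_le]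
  positivity

lemma unc6_Uop_eq {n : ℕ} (l : ℝ) (ξ : F6 n) (p : Pp n) :
    unc6 (Uop l ξ) p
      = (((Real.exp (-l * p.2.2)) ^ n : ℝ) : ℂ) *
          ebar (eta l p.2.2 * beta (Real.exp (-l * p.2.2) • p.1.1.1)
            (p.2.1.2 - Real.exp (-l * p.2.2) • p.1.1.2)) *
          unc6 ξ (Tmap n l p) := rfl

lemma nnnorm_sq_unc6_Uop {n : ℕ} (l : ℝ) (ξ : F6 n) (p : Pp n) :
    (‖unc6 (Uop l ξ) p‖₊ : ℝ≥0∞) ^ 2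
      = ENNReal.ofReal (Real.exp (-l * p.2.2) ^ (2 * n)) *
          (‖unc6 ξ (Tmap n l p)‖₊ : ℝ≥0∞) ^ 2 := by
  rw [unc6_Uop_eq l ξ p]
  rw [nnnorm_mul, nnnorm_mul, ENNReal.coe_mul, ENNReal.coe_mul]
  have h2 : ((‖ebar (eta l p.2.2 * beta (Real.exp (-l * p.2.2) • p.1.1.1)
      (p.2.1.2 - Real.exp (-l * p.2.2) • p.1.1.2))‖₊ : ℝ≥0) : ℝ≥0∞) = 1 := by
    rw [← enorm_eq_nnnorm, ← ofReal_norm, norm_ebar, ENNReal.ofReal_one]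
  have h1 : ((‖(((Real.exp (-l * p.2.2)) ^ n : ℝ) : ℂ)‖₊ : ℝ≥0) : ℝ≥0∞)
      = ENNReal.ofReal (Real.exp (-l * p.2.2) ^ n) := by
    rw [← enorm_eq_nnnorm, ← ofReal_norm, Complex.norm_real, Real.norm_eq_abs,
      abs_of_pos (by positivity)]
  rw [h1, h2, mul_one, mul_pow, ← ENNReal.ofReal_pow (by positivity), ← pow_mul,
    mul_comm n 2]

lemma lint_norm_eq (n : ℕ) (l : ℝ) (ξ : F6 n)
    (hm : AEStronglyMeasurable (unc6 ξ) volume) :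
    ∫⁻ p, (‖unc6 (Uop l ξ) p‖₊ : ℝ≥0∞) ^ 2 = ∫⁻ p, (‖unc6 ξ p‖₊ : ℝ≥0∞) ^ 2 := by
  obtain ⟨g, hgm, hge⟩ := hm
  have hcomp : (fun p : Pp n => unc6 ξ (Tmap n l p)) =ᵐ[volume]
      fun p => g (Tmap n l p) := (tmap_qmp n l).ae_eq_comp hge
  calc ∫⁻ p, (‖unc6 (Uop l ξ) p‖₊ : ℝ≥0∞) ^ 2
      = ∫⁻ p, ENNReal.ofReal (Real.exp (-l * p.2.2) ^ (2 * n)) *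
          (‖unc6 ξ (Tmap n l p)‖₊ : ℝ≥0∞) ^ 2 :=
        lintegral_congr fun p => nnnorm_sq_unc6_Uop l ξ p
    _ = ∫⁻ p, ENNReal.ofReal (Real.exp (-l * p.2.2) ^ (2 * n)) *
          (‖g (Tmap n l p)‖₊ : ℝ≥0∞) ^ 2 := by
        refine lintegral_congr_ae ?_
        filter_upwards [hcomp] with p hp
        rw [hp]
    _ = ∫⁻ p, (‖g p‖₊ : ℝ≥0∞) ^ 2 :=
        key_lintegral n l _ ((hgm.measurable.nnnorm.coe_nnreal_ennreal).pow_const 2)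
    _ = ∫⁻ p, (‖unc6 ξ p‖₊ : ℝ≥0∞) ^ 2 := by
        refine lintegral_congr_ae ?_
        filter_upwards [hge] with p hp
        rw [hp]

lemma continuous_phase (n : ℕ) (l : ℝ) :
    Continuous (fun p : Pp n =>
      (((Real.exp (-l * p.2.2)) ^ n : ℝ) : ℂ) *
        ebar (eta l p.2.2 * beta (Real.exp (-l * p.2.2) • p.1.1.1)
          (p.2.1.2 - Real.exp (-l * p.2.2) • p.1.1.2))) := by
  have hebar : Continuous ebar := by
    apply Complex.continuous_exp.comp
    fun_prop
  apply Continuous.mul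
  · fun_prop
  · apply hebar.comp
    apply Continuous.mul
    · unfold eta
      fun_prop
    · unfold beta
      apply continuous_finset_sum
      intro i _
      fun_prop

lemma aesm_Uop (n : ℕ) (l : ℝ) (ξ : F6 n)
    (hm : AEStronglyMeasurable (unc6 ξ) volume) :
    AEStronglyMeasurable (unc6 (Uop l ξ)) volume := by
  obtain ⟨g, hgm, hge⟩ := hm
  refine ⟨fun p => (((Real.exp (-l * p.2.2)) ^ n : ℝ) : ℂ) *
      ebar (eta l p.2.2 * beta (Real.exp (-l * p.2.2) • p.1.1.1)
        (p.2.1.2 - Real.exp (-l * p.2.2) • p.1.1.2)) * g (Tmap n l p), ?_, ?_⟩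
  · exact ((continuous_phase n l).stronglyMeasurable).mul
      (hgm.comp_measurable (tmap_measurable n l))
  · have hcomp : (fun p : Pp n => unc6 ξ (Tmap n l p)) =ᵐ[volume]
        fun p => g (Tmap n l p) := (tmap_qmp n l).ae_eq_comp hge
    filter_upwards [hcomp] with p hp
    rw [unc6_Uop_eq l ξ p, hp]

/-- U_A is a unitary operator on ℋ ⊗ ℋ = L²((ℝⁿ×ℝⁿ×ℝ)²) -/
theorem Uop_unitary (n : ℕ) (l : ℝ) :
    Function.Bijective (Uop (n := n) l) ∧
    ∀ ξ : F6 n, MemLp (unc6 ξ) 2 volume →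
      MemLp (unc6 (Uop l ξ)) 2 volume ∧
      (∫ p, ‖unc6 (Uop l ξ) p‖ ^ 2) = ∫ p, ‖unc6 ξ p‖ ^ 2 := by
  constructor
  · exact Function.bijective_iff_has_inverse.mpr
      ⟨Vop l, fun ξ => Vop_Uop l ξ, fun η => Uop_Vop l η⟩
  · intro ξ hξ
    have hae := aesm_Uop n l ξ hξ.aestronglyMeasurable
    have hlin := lint_norm_eq n l ξ hξ.aestronglyMeasurable
    have hsnorm : eLpNorm (unc6 (Uop l ξ)) 2 volume = eLpNorm (unc6 ξ) 2 volume := by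
      rw [eLpNorm_eq_lintegral_rpow_enorm_toReal (by norm_num : (2:ℝ≥0∞) ≠ 0) ENNReal.ofNat_ne_top,
        eLpNorm_eq_lintegral_rpow_enorm_toReal (by norm_num : (2:ℝ≥0∞) ≠ 0) ENNReal.ofNat_ne_top]
      congr 1
      have h2 : ∀ x : ℝ≥0∞, x ^ ((2 : ℝ≥0∞).toReal) = x ^ (2 : ℕ) := fun x => by
        rw [ENNReal.toReal_ofNat, show ((2 : ℝ)) = ((2 : ℕ) : ℝ) by norm_num,
          ENNReal.rpow_natCast]
      simp only [h2]
      exact hlin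
    refine ⟨⟨hae, by rw [hsnorm]; exact hξ.2⟩, ?_⟩
    have base : ∀ f : Pp n → ℂ, AEStronglyMeasurable f volume →
        ∫ p, ‖f p‖ ^ 2 = (∫⁻ p, (‖f p‖₊ : ℝ≥0∞) ^ 2).toReal := by
      intro f hf
      rw [integral_eq_lintegral_of_nonneg_ae (f := fun p => ‖f p‖ ^ 2) (Filter.Eventually.of_forall fun p => by
          positivity)
        (hf.norm.pow 2 : AEStronglyMeasurable (fun p => ‖f p‖ ^ 2) volume)]
      congr 1
      refine lintegral_congr fun p => ?_
      rw [← enorm_eq_nnnorm, ← ofReal_norm, ← ENNReal.ofReal_pow (norm_nonneg _)]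
    rw [base _ hae, base _ hξ.aestronglyMeasurable, hlin]
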